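/- There exists an absolute constant c such that for all natural numbers n, k, q with 1 ≤ k ≤ n and q ≥ 1 there exists an (n, k, q)-universal family F of functions from {1, …, n} to {1, …, q} with |F| ≤ c · q^k · k · (log₂ n + log₂ q + 1). -/

import Mathlib

open Finset

/-- Binomial-type bound: `2·m^m ≤ (m+1)^m` for `m ≥ 1`. -/
lemma two_mul_pow_le_aux (m : ℕ) (hm : 1 ≤ m) : 2 * m ^ m ≤ (m + 1) ^ m := by
  have hpow : (m + 1) ^ m = ∑ j ∈ Finset.range (m + 1), m ^ j * Nat.choose m j := by
    have := add_pow m 1 m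
    simpa using this
  have hsub : ({m - 1, m} : Finset ℕ) ⊆ Finset.range (m + 1) := by
    intro x hx
    simp only [Finset.mem_insert, Finset.mem_singleton] at hx
    rcases hx with rfl | rfl <;> simp [Nat.lt_succ_iff]
  have hne : m - 1 ≠ m := by omega
  have hpair : ∑ j ∈ ({m - 1, m} : Finset ℕ), m ^ j * Nat.choose m j = 2 * m ^ m := by
    rw [Finset.sum_pair hne]
    have h1 : Nat.choose m (m - 1) = m := by
      have := Nat.choose_symm (show 1 ≤ m from hm)
      simpa [Nat.choose_one_right] using this
    have h2 : m ^ (m - 1) * m = m ^ m := by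
      rw [← pow_succ]
      congr 1
      omega
    rw [h1, Nat.choose_self, mul_one, h2]
    ring
  calc 2 * m ^ m = ∑ j ∈ ({m - 1, m} : Finset ℕ), m ^ j * Nat.choose m j := hpair.symm
    _ ≤ ∑ j ∈ Finset.range (m + 1), m ^ j * Nat.choose m j :=
        Finset.sum_le_sum_of_subset hsub
    _ = (m + 1) ^ m := hpow.symm

/-- Greedy set-cover: if from any nonempty set of points some element covers a `1/Q`
fraction, then `t` elements suffice whenever `|R|·(Q-1)^t < Q^t`. -/
lemma greedy_cover {γ P : Type*} [DecidableEq γ] [DecidableEq P]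
    (cov : γ → P → Prop) [∀ g, DecidablePred (cov g)] (Q : ℕ)
    (hstep : ∀ R : Finset P, R.Nonempty → ∃ g, R.card ≤ Q * (R.filter (cov g)).card) :
    ∀ t : ℕ, ∀ R : Finset P, R.card * (Q - 1) ^ t < Q ^ t →
      ∃ F : Finset γ, F.card ≤ t ∧ ∀ p ∈ R, ∃ g ∈ F, cov g p := by
  intro t
  induction t with
  | zero =>
    intro R h
    simp only [pow_zero, mul_one, Nat.lt_one_iff, Finset.card_eq_zero] at h
    exact ⟨∅, le_rfl, by simp [h]⟩
  | succ t ih =>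
    intro R h
    rcases R.eq_empty_or_nonempty with rfl | hne
    · exact ⟨∅, by simp, by simp⟩
    obtain ⟨g, hg⟩ := hstep R hne
    have hQpos : 1 ≤ Q := by
      rcases Nat.eq_zero_or_pos Q with rfl | hQ
      · rw [zero_mul] at hg
        have := hne.card_pos
        omega
      · exact hQ
    obtain ⟨m, rfl⟩ : ∃ m, Q = m + 1 := ⟨Q - 1, by omega⟩
    simp only [Nat.add_sub_cancel] at h ⊢
    set R' := R.filter (fun p => ¬ cov g p) with hR'def
    have hsplit : (R.filter (cov g)).card + R'.card = R.card :=
      Finset.card_filter_add_card_filter_not _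
    have key : (m + 1) * R'.card ≤ m * R.card := by
      have h1 : (m + 1) * R'.card + R.card ≤ (m + 1) * R.card := by
        calc (m + 1) * R'.card + R.card
            ≤ (m + 1) * R'.card + (m + 1) * (R.filter (cov g)).card :=
              add_le_add_right hg _
          _ = (m + 1) * R.card := by rw [← mul_add, add_comm R'.card, hsplit]
      have h2 : (m + 1) * R.card = m * R.card + R.card := by ring
      omega
    have h' : R'.card * m ^ t < (m + 1) ^ t := by
      have hchain : (m + 1) * (R'.card * m ^ t) < (m + 1) * (m + 1) ^ t := by
        calc (m + 1) * (R'.card * m ^ t) = ((m + 1) * R'.card) * m ^ t := by ring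
          _ ≤ (m * R.card) * m ^ t := Nat.mul_le_mul_right _ key
          _ = R.card * m ^ (t + 1) := by rw [pow_succ]; ring
          _ < (m + 1) ^ (t + 1) := h
          _ = (m + 1) * (m + 1) ^ t := by rw [pow_succ]; ring
      exact Nat.lt_of_mul_lt_mul_left hchain
    obtain ⟨F, hF1, hF2⟩ := ih R' h'
    refine ⟨insert g F, (Finset.card_insert_le _ _).trans (by omega), ?_⟩
    intro p hp
    by_cases hc : cov g p
    · exact ⟨g, Finset.mem_insert_self _ _, hc⟩
    · obtain ⟨g', hg', hc'⟩ := hF2 p (Finset.mem_filter.mpr ⟨hp, hc⟩)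
      exact ⟨g', Finset.mem_insert_of_mem hg', hc'⟩

/-- The number of functions agreeing with a given partial function on `S`. -/
lemma count_agree (n q : ℕ) (S : Finset (Fin n)) (ψ : S → Fin q) :
    (Finset.univ.filter fun f : Fin n → Fin q => ∀ x : S, f x = ψ x).card
      = q ^ (n - S.card) := by
  rw [← Fintype.card_subtype]
  have e : {f : Fin n → Fin q // ∀ x : S, f x = ψ x} ≃ ({x : Fin n // x ∉ S} → Fin q) :=
    { toFun := fun f x => f.1 x.1
      invFun := fun g =>
        ⟨fun y => if h : y ∈ S then ψ ⟨y, h⟩ else g ⟨y, h⟩, fun x => by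
          cases x with
          | mk y hy => simp [hy]⟩
      left_inv := fun f => by
        apply Subtype.ext
        funext y
        by_cases h : y ∈ S
        · simp only [dif_pos h]
          exact (f.2 ⟨y, h⟩).symm
        · simp [h]
      right_inv := fun g => by
        funext x
        cases x with
        | mk y hy => simp [hy] }
  rw [Fintype.card_congr e, Fintype.card_fun, Fintype.card_fin,
    Fintype.card_subtype_compl]
  congr 1
  · congr 1
    · exact Fintype.card_fin n
    · exact Fintype.card_coe S

/-- There is an absolute constant `c` such that for all `1 ≤ k ≤ n` and `q ≥ 1` there is an
`(n, k, q)`-universal family of size at most `c · q^k · k · (log₂ n + log₂ q + 1)`: a family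
`F` of functions `Fin n → Fin q` such that for every `k`-set `S ⊆ Fin n` and every colouring
`φ` of `S` there is `f ∈ F` agreeing with `φ` on `S`. -/
theorem exists_universal_family_small :
    ∃ c : ℕ, ∀ n k q : ℕ, 1 ≤ k → k ≤ n → 1 ≤ q →
      ∃ F : Finset (Fin n → Fin q),
        F.card ≤ c * q ^ k * k * (Nat.log 2 n + Nat.log 2 q + 1) ∧
        ∀ S : Finset (Fin n), S.card = k → ∀ φ : Fin n → Fin q,
          ∃ f ∈ F, ∀ x ∈ S, f x = φ x := by
  refine ⟨2, fun n k q hk hkn hq => ?_⟩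
  haveI : Nonempty (Fin q) := ⟨⟨0, hq⟩⟩
  set L := Nat.log 2 n + Nat.log 2 q with hL
  -- pairs (k-set, colouring of it)
  let P := Σ S : {S : Finset (Fin n) // S.card = k}, (S.1 → Fin q)
  let cov : (Fin n → Fin q) → P → Prop := fun f p => ∀ x : p.1.1, f x = p.2 x
  -- the covering step
  have hstep : ∀ R : Finset P, R.Nonempty →
      ∃ g : Fin n → Fin q, R.card ≤ q ^ k * (R.filter (cov g)).card := by
    intro R hne
    have count : ∀ p : P,
        (Finset.univ.filter fun f : Fin n → Fin q => cov f p).card = q ^ (n - k) := by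
      intro p
      have := count_agree n q p.1.1 p.2
      rwa [p.1.2] at this
    have hsum : ∑ f : Fin n → Fin q, (R.filter (cov f)).card = R.card * q ^ (n - k) := by
      calc ∑ f : Fin n → Fin q, (R.filter (cov f)).card
          = ∑ f : Fin n → Fin q, ∑ p ∈ R, if cov f p then 1 else 0 := by
            simp only [Finset.card_filter]
        _ = ∑ p ∈ R, ∑ f : Fin n → Fin q, if cov f p then 1 else 0 := Finset.sum_comm
        _ = ∑ p ∈ R, (Finset.univ.filter fun f : Fin n → Fin q => cov f p).card := by
            simp only [Finset.card_filter]
        _ = ∑ _p ∈ R, q ^ (n - k) := Finset.sum_congr rfl fun p _ => count p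
        _ = R.card * q ^ (n - k) := by rw [Finset.sum_const, smul_eq_mul]
    have htot : ∑ _f : Fin n → Fin q, R.card
        ≤ ∑ f : Fin n → Fin q, q ^ k * (R.filter (cov f)).card := by
      rw [← Finset.mul_sum, hsum, Finset.sum_const, smul_eq_mul, Finset.card_univ,
        Fintype.card_fun, Fintype.card_fin, Fintype.card_fin]
      apply le_of_eq
      have hpw : q ^ k * q ^ (n - k) = q ^ n := by
        rw [← pow_add, Nat.add_sub_cancel' hkn]
      rw [← hpw]
      ring
    obtain ⟨f, _, hf⟩ := Finset.exists_le_of_sum_le Finset.univ_nonempty htot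
    exact ⟨f, hf⟩
  -- total number of pairs
  have hR₀ : (Finset.univ : Finset P).card = n.choose k * q ^ k := by
    rw [Finset.card_univ]
    calc Fintype.card P
        = ∑ S : {S : Finset (Fin n) // S.card = k}, Fintype.card (S.1 → Fin q) :=
          Fintype.card_sigma
      _ = ∑ _S : {S : Finset (Fin n) // S.card = k}, q ^ k :=
          Finset.sum_congr rfl fun S _ => by
            rw [Fintype.card_fun, Fintype.card_fin, Fintype.card_coe, S.2]
      _ = Fintype.card {S : Finset (Fin n) // S.card = k} * q ^ k := by
          rw [Finset.sum_const, smul_eq_mul, Finset.card_univ]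
      _ = n.choose k * q ^ k := by rw [Fintype.card_finset_len, Fintype.card_fin]
  set s := k * (L + 2) with hs
  set t := (q ^ k - 1) * s + 1 with ht
  have hn1 : 1 ≤ n := hk.trans hkn
  have hRlt : (Finset.univ : Finset P).card < 2 ^ s := by
    rw [hR₀]
    calc n.choose k * q ^ k ≤ n ^ k * q ^ k :=
          Nat.mul_le_mul_right _ (Nat.choose_le_pow _ _)
      _ < (2 ^ (Nat.log 2 n + 1)) ^ k * (2 ^ (Nat.log 2 q + 1)) ^ k := by
          have h1 : n < 2 ^ (Nat.log 2 n + 1) := Nat.lt_pow_succ_log_self (by norm_num) n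
          have h2 : q < 2 ^ (Nat.log 2 q + 1) := Nat.lt_pow_succ_log_self (by norm_num) q
          exact Nat.mul_lt_mul'' (Nat.pow_lt_pow_left h1 (by omega))
            (Nat.pow_lt_pow_left h2 (by omega))
      _ = 2 ^ s := by rw [← pow_mul, ← pow_mul, ← pow_add, hs]; congr 1; rw [hL]; ring
  have hmain : (Finset.univ : Finset P).card * (q ^ k - 1) ^ t < (q ^ k) ^ t := by
    have hQ1 : 1 ≤ q ^ k := Nat.one_le_pow _ _ hq
    rcases eq_or_lt_of_le hQ1 with hQeq | hQ2
    · rw [← hQeq]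
      simp [ht]
    · obtain ⟨m, hm⟩ : ∃ m, q ^ k = m + 2 := ⟨q ^ k - 2, by omega⟩
      have hm1 : q ^ k - 1 = m + 1 := by omega
      have htval : t = (m + 1) * s + 1 := by rw [ht, hm1]
      rw [hm1, hm, htval]
      have haux : 2 * (m + 1) ^ (m + 1) ≤ (m + 2) ^ (m + 1) := by
        have := two_mul_pow_le_aux (m + 1) (by omega)
        simpa using this
      calc (Finset.univ : Finset P).card * (m + 1) ^ ((m + 1) * s + 1)
          = (Finset.univ : Finset P).card * (m + 1) ^ ((m + 1) * s) * (m + 1) := by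
            rw [pow_succ]; ring
        _ ≤ (Finset.univ : Finset P).card * (m + 1) ^ ((m + 1) * s) * (m + 2) :=
            Nat.mul_le_mul_left _ (by omega)
        _ < 2 ^ s * (m + 1) ^ ((m + 1) * s) * (m + 2) := by
            have hpos : 0 < (m + 1) ^ ((m + 1) * s) * (m + 2) := by positivity
            calc (Finset.univ : Finset P).card * (m + 1) ^ ((m + 1) * s) * (m + 2)
                = (Finset.univ : Finset P).card * ((m + 1) ^ ((m + 1) * s) * (m + 2)) := by
                  ring
              _ < 2 ^ s * ((m + 1) ^ ((m + 1) * s) * (m + 2)) :=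
                  Nat.mul_lt_mul_of_lt_of_le hRlt le_rfl hpos
              _ = 2 ^ s * (m + 1) ^ ((m + 1) * s) * (m + 2) := by ring
        _ = (2 * (m + 1) ^ (m + 1)) ^ s * (m + 2) := by
            rw [mul_pow, ← pow_mul]
        _ ≤ ((m + 2) ^ (m + 1)) ^ s * (m + 2) :=
            Nat.mul_le_mul_right _ (Nat.pow_le_pow_left haux s)
        _ = (m + 2) ^ ((m + 1) * s + 1) := by rw [← pow_mul, ← pow_succ]
  obtain ⟨F, hFc, hFcov⟩ := greedy_cover cov (q ^ k) hstep t Finset.univ hmain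
  refine ⟨F, ?_, ?_⟩
  · have hs1 : 1 ≤ s := by
      have : 0 < k * (L + 2) := Nat.mul_pos hk (by omega)
      omega
    have h2 : t ≤ q ^ k * s := by
      have h3 : (q ^ k - 1) * s + s = q ^ k * s := by
        obtain ⟨w, hw⟩ : ∃ w, q ^ k = w + 1 := ⟨q ^ k - 1, (Nat.sub_add_cancel (Nat.one_le_pow _ _ hq)).symm⟩
        rw [hw]
        simp only [Nat.add_sub_cancel]
        ring
      rw [ht, ← h3]
      exact add_le_add_right hs1 _
    have h4 : q ^ k * s ≤ 2 * q ^ k * k * (L + 1) := by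
      rw [hs]
      calc q ^ k * (k * (L + 2)) ≤ q ^ k * (k * (2 * (L + 1))) :=
            Nat.mul_le_mul_left _ (Nat.mul_le_mul_left _ (by omega))
        _ = 2 * q ^ k * k * (L + 1) := by ring
    calc F.card ≤ t := hFc
      _ ≤ q ^ k * s := h2
      _ ≤ 2 * q ^ k * k * (L + 1) := h4
      _ = 2 * q ^ k * k * (Nat.log 2 n + Nat.log 2 q + 1) := by rw [hL]
  · intro S hS φ
    obtain ⟨f, hf, hcov⟩ := hFcov ⟨⟨S, hS⟩, fun x => φ x⟩ (Finset.mem_univ _)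
    exact ⟨f, hf, fun x hx => hcov ⟨x, hx⟩⟩
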